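/- Let F be a separating union-closed family with x ∈ U_F optimal. If A ∈ F with x ∉ A satisfies A ∪ X = U_F for all X ∈ F_x, then U_F = A ∪ {x}. -/
import Mathlib

/-- If `F` is separating and union-closed, `x ∈ U_F` is optimal, and `A ∈ F`
with `x ∉ A` satisfies `A ∪ X = U_F` for all `X ∈ F_x`, then `U_F = A ∪ {x}`. -/
theorem stmt_11 {α : Type*} (F : Set (Set α))
    (hUC : ∀ A ∈ F, ∀ B ∈ F, A ∪ B ∈ F)
    (hsep : ∀ x ∈ ⋃₀ F, ∀ y ∈ ⋃₀ F,
      {A ∈ F | x ∈ A} = {A ∈ F | y ∈ A} → x = y)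
    (x : α) (hx : x ∈ ⋃₀ F)
    (hopt : ∀ y ∈ ⋃₀ F, {A ∈ F | x ∈ A} ⊆ {A ∈ F | y ∈ A} →
      {A ∈ F | y ∈ A} = {A ∈ F | x ∈ A})
    (A : Set α) (hA : A ∈ F) (hxA : x ∉ A)
    (hcov : ∀ X ∈ F, x ∈ X → A ∪ X = ⋃₀ F) :
    ⋃₀ F = A ∪ {x} := by
  apply Set.Subset.antisymm
  · intro y hy
    by_cases hyA : y ∈ A
    · exact Or.inl hyA
    · right
      have hsub : {A ∈ F | x ∈ A} ⊆ {A ∈ F | y ∈ A} := by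
        intro X hX
        refine ⟨hX.1, ?_⟩
        have := hcov X hX.1 hX.2
        have : y ∈ A ∪ X := this ▸ hy
        rcases this with h | h
        · exact absurd h hyA
        · exact h
      have := hsep x hx y hy ((hopt y hy hsub).symm)
      simp [← this]
  · intro y hy
    rcases hy with h | h
    · exact ⟨A, hA, h⟩
    · subst h; exact hx
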